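/- The second derivative at 0 of the F-distribution-based weight function H_{d_1,d_2} equals (2-d_1)(d_2+2)/(2(d_1+d_2)), which is negative for d_1 > 2 and d_2 > 0. -/

import Mathlib

open Real Set

lemma hasDerivAt_term (c r s x : ℝ) (hc : 0 < c) (hx : -1 < x) :
    HasDerivAt (fun τ : ℝ => (1 + τ) ^ r * (1 + c * (1 + τ)) ^ s)
      (r * (1 + x) ^ (r - 1) * (1 + c * (1 + x)) ^ s
        + (1 + x) ^ r * (c * s * (1 + c * (1 + x)) ^ (s - 1))) x := by
  have h1 : (0:ℝ) < 1 + x := by linarith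
  have h2 : (0:ℝ) < 1 + c * (1 + x) := by nlinarith
  have d1 : HasDerivAt (fun τ : ℝ => (1 + τ) ^ r) (1 * r * (1 + x) ^ (r - 1)) x :=
    ((hasDerivAt_id x).const_add 1).rpow_const (Or.inl h1.ne')
  have dinner : HasDerivAt (fun τ : ℝ => 1 + c * (1 + τ)) c x := by
    simpa using (((hasDerivAt_id x).const_add 1).const_mul c).const_add 1
  have d2 : HasDerivAt (fun τ : ℝ => (1 + c * (1 + τ)) ^ s)
      (c * s * (1 + c * (1 + x)) ^ (s - 1)) x :=
    dinner.rpow_const (Or.inl h2.ne')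
  have := d1.mul d2
  exact this.congr_deriv (by ring)

/-- The F-type kernel (up to a positive constant) with `a = d₁(d₂+2)/((d₁-2)d₂)`,
extended by `0` outside `(0,∞)`. -/
noncomputable def fKernel (d₁ d₂ x : ℝ) : ℝ :=
  if 0 < x then
    (x / (d₁ * (d₂ + 2) / ((d₁ - 2) * d₂))) ^ (d₁ / 2 - 1) *
      (1 + d₁ * x / (d₂ * (d₁ * (d₂ + 2) / ((d₁ - 2) * d₂)))) ^ (-((d₁ + d₂) / 2))
  else 0

/-- Weight function 4: the F-distribution-based weight. -/
noncomputable def Hf (d₁ d₂ τ : ℝ) : ℝ := fKernel d₁ d₂ (τ + 1) / fKernel d₁ d₂ 1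

lemma Hf_eq (d₁ d₂ : ℝ) (hd₁ : 2 < d₁) (hd₂ : 0 < d₂) {τ : ℝ} (hτ : -1 < τ) :
    Hf d₁ d₂ τ = (1 + τ) ^ (d₁ / 2 - 1) *
      (1 + (d₁ - 2) / (d₂ + 2) * (1 + τ)) ^ (-((d₁ + d₂) / 2)) *
      (1 + (d₁ - 2) / (d₂ + 2)) ^ ((d₁ + d₂) / 2) := by
  have h2 : (0:ℝ) < d₂ + 2 := by linarith
  have h12 : (0:ℝ) < d₁ - 2 := by linarith
  have ha : (0:ℝ) < d₁ * (d₂ + 2) / ((d₁ - 2) * d₂) := by positivity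
  have hx : (0:ℝ) < 1 + τ := by linarith
  have hB : (0:ℝ) < 1 + (d₁ - 2) / (d₂ + 2) := by positivity
  have hsimp : ∀ x : ℝ, d₁ * x / (d₂ * (d₁ * (d₂ + 2) / ((d₁ - 2) * d₂)))
      = (d₁ - 2) / (d₂ + 2) * x := by
    intro x; field_simp
  rw [Hf, add_comm τ 1, fKernel, fKernel, if_pos hx, if_pos one_pos, hsimp, hsimp,
    Real.div_rpow hx.le ha.le, Real.div_rpow zero_le_one ha.le, Real.one_rpow, mul_one,
    Real.rpow_neg hB.le ((d₁ + d₂) / 2)]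
  have hAp : (0:ℝ) < (d₁ * (d₂ + 2) / ((d₁ - 2) * d₂)) ^ (d₁ / 2 - 1) :=
    Real.rpow_pos_of_pos ha _
  have hBq : (0:ℝ) < (1 + (d₁ - 2) / (d₂ + 2)) ^ ((d₁ + d₂) / 2) :=
    Real.rpow_pos_of_pos hB _
  field_simp

/-- The second derivative at `0` of the F-distribution-based weight function equals
`(2-d₁)(d₂+2)/(2(d₁+d₂))`, which is negative for `d₁ > 2`, `d₂ > 0`. -/
theorem f_weight_second_deriv (d₁ d₂ : ℝ) (hd₁ : 2 < d₁) (hd₂ : 0 < d₂) :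
    deriv (deriv (Hf d₁ d₂)) 0 = (2 - d₁) * (d₂ + 2) / (2 * (d₁ + d₂)) ∧
      (2 - d₁) * (d₂ + 2) / (2 * (d₁ + d₂)) < 0 := by
  have h2 : (0:ℝ) < d₂ + 2 := by linarith
  have h12 : (0:ℝ) < d₁ + d₂ := by linarith
  constructor
  · set c : ℝ := (d₁ - 2) / (d₂ + 2) with hc_def
    set p : ℝ := d₁ / 2 - 1 with hp_def
    set q : ℝ := (d₁ + d₂) / 2 with hq_def
    have hc : 0 < c := by rw [hc_def]; apply div_pos <;> linarith
    have hB : (0:ℝ) < 1 + c := by linarith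
    set K : ℝ := (1 + c) ^ q with hK_def
    -- first derivative on Ioi (-1)
    have hderiv : ∀ x : ℝ, -1 < x → deriv (Hf d₁ d₂) x =
        (p * ((1 + x) ^ (p - 1) * (1 + c * (1 + x)) ^ (-q))
          + c * (-q) * ((1 + x) ^ p * (1 + c * (1 + x)) ^ (-q - 1))) * K := by
      intro x hx
      have hev : Hf d₁ d₂ =ᶠ[nhds x]
          fun τ => (1 + τ) ^ p * (1 + c * (1 + τ)) ^ (-q) * K := by
        filter_upwards [isOpen_Ioi.mem_nhds (show x ∈ Ioi (-1:ℝ) from hx)] with τ hτ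
        exact Hf_eq d₁ d₂ hd₁ hd₂ hτ
      rw [Filter.EventuallyEq.deriv_eq hev,
        (((hasDerivAt_term c p (-q) x hc hx)).mul_const K).deriv]
      ring
    -- deriv Hf eventually equals the nice function near 0
    have hev2 : deriv (Hf d₁ d₂) =ᶠ[nhds (0:ℝ)]
        fun x => (p * ((1 + x) ^ (p - 1) * (1 + c * (1 + x)) ^ (-q))
          + c * (-q) * ((1 + x) ^ p * (1 + c * (1 + x)) ^ (-q - 1))) * K := by
      filter_upwards [isOpen_Ioi.mem_nhds (show (0:ℝ) ∈ Ioi (-1:ℝ) by norm_num)] with x hx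
      exact hderiv x hx
    have hd2 : HasDerivAt
        (fun x : ℝ => (p * ((1 + x) ^ (p - 1) * (1 + c * (1 + x)) ^ (-q))
          + c * (-q) * ((1 + x) ^ p * (1 + c * (1 + x)) ^ (-q - 1))) * K)
        ((p * ((p - 1) * (1 + 0) ^ (p - 1 - 1) * (1 + c * (1 + 0)) ^ (-q)
            + (1 + 0) ^ (p - 1) * (c * (-q) * (1 + c * (1 + 0)) ^ (-q - 1)))
          + c * (-q) * (p * (1 + 0) ^ (p - 1) * (1 + c * (1 + 0)) ^ (-q - 1)
            + (1 + 0) ^ p * (c * (-q - 1) * (1 + c * (1 + 0)) ^ (-q - 1 - 1)))) * K) 0 :=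
      (((hasDerivAt_term c (p - 1) (-q) 0 hc (by norm_num)).const_mul p).add
        ((hasDerivAt_term c p (-q - 1) 0 hc (by norm_num)).const_mul (c * (-q)))).mul_const K
    rw [Filter.EventuallyEq.deriv_eq hev2, hd2.deriv]
    simp only [add_zero, mul_one, Real.one_rpow]
    have e0 : (1 + c) ^ (-q) = ((1 + c) ^ q)⁻¹ := Real.rpow_neg hB.le q
    have e1 : (1 + c) ^ (-q - 1) = ((1 + c) ^ q * (1 + c))⁻¹ := by
      rw [show (-q - 1 : ℝ) = -(q + 1) by ring, Real.rpow_neg hB.le, Real.rpow_add hB,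
        Real.rpow_one]
    have e2 : (1 + c) ^ (-q - 1 - 1) = ((1 + c) ^ q * (1 + c) * (1 + c))⁻¹ := by
      rw [show (-q - 1 - 1 : ℝ) = -(q + 1 + 1) by ring, Real.rpow_neg hB.le,
        Real.rpow_add hB, Real.rpow_add hB, Real.rpow_one]
    rw [e0, e1, e2, hK_def]
    have hBq : (0:ℝ) < (1 + c) ^ q := Real.rpow_pos_of_pos hB q
    rw [hp_def, hq_def, hc_def] at *
    generalize (1 + (d₁ - 2) / (d₂ + 2)) ^ ((d₁ + d₂) / 2) = X at hBq ⊢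
    have hne : d₂ + 2 + (d₁ - 2) ≠ 0 := (by linarith : (0:ℝ) < d₂ + 2 + (d₁ - 2)).ne'
    field_simp
    ring
  · apply div_neg_of_neg_of_pos
    · apply mul_neg_of_neg_of_pos <;> linarith
    · linarith
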